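/- For every prime p ≥ 5, the sum of reciprocals ∑_{k=1}^{p-1} 1/k ≡ 0 (mod p^2), i.e. the numerator of the harmonic number H_{p-1} (in lowest terms) is divisible by p^2. -/

import Mathlib

open Finset

private lemma wh_aux1 (p : ℕ) [hp : Fact p.Prime] (h5 : 5 ≤ p) :
    ∑ k ∈ Finset.Icc 1 (p - 1), ((k : ZMod p)⁻¹) ^ 2 = 0 := by
  classical
  haveI : NeZero p := ⟨hp.out.ne_zero⟩
  have hcast : ∀ k ∈ Finset.Icc 1 (p - 1), (k : ZMod p) ≠ 0 := by
    intro k hk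
    simp only [Finset.mem_Icc] at hk
    rw [Ne, ZMod.natCast_eq_zero_iff]
    intro hdvd
    have := Nat.le_of_dvd (by omega) hdvd
    omega
  have hsum : ∑ k ∈ Finset.Icc 1 (p - 1), ((k : ZMod p)⁻¹) ^ 2
      = ∑ x ∈ Finset.univ \ {(0 : ZMod p)}, x ^ 2 := by
    refine Finset.sum_nbij' (fun k => ((k : ZMod p))⁻¹) (fun x => (x⁻¹).val) ?_ ?_ ?_ ?_ ?_
    · intro k hk
      simp only [Finset.mem_sdiff, Finset.mem_univ, Finset.mem_singleton, true_and]
      exact inv_ne_zero (hcast k hk)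
    · intro x hx
      simp only [Finset.mem_sdiff, Finset.mem_univ, Finset.mem_singleton, true_and] at hx
      have hxi : x⁻¹ ≠ 0 := inv_ne_zero hx
      have hv0 : (x⁻¹).val ≠ 0 := by
        intro h
        apply hxi
        rw [← ZMod.natCast_zmod_val (x⁻¹), h, Nat.cast_zero]
      have hvlt : (x⁻¹).val < p := ZMod.val_lt _
      simp only [Finset.mem_Icc]
      omega
    · intro k hk
      simp only [Finset.mem_Icc] at hk
      show ((((k : ZMod p))⁻¹)⁻¹).val = k
      rw [inv_inv, ZMod.val_cast_of_lt (by omega)]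
    · intro x hx
      show (((x⁻¹).val : ZMod p))⁻¹ = x
      rw [ZMod.natCast_zmod_val, inv_inv]
    · intro k hk
      rfl
  rw [hsum]
  have htot : ∑ x : ZMod p, x ^ 2 = 0 := by
    apply FiniteField.sum_pow_lt_card_sub_one
    rw [ZMod.card]
    omega
  have hsplit := Finset.sum_sdiff (f := fun x : ZMod p => x ^ 2)
    (Finset.subset_univ ({0} : Finset (ZMod p)))
  rw [htot, Finset.sum_singleton] at hsplit
  simpa using hsplit

private lemma wh_aux2 (p : ℕ) [hp : Fact p.Prime] (h5 : 5 ≤ p) :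
    ∑ k ∈ Finset.Icc 1 (p - 1), ((k : ZMod (p ^ 2)))⁻¹ = 0 := by
  classical
  haveI : NeZero p := ⟨hp.out.ne_zero⟩
  haveI : NeZero (p ^ 2) := ⟨pow_ne_zero 2 hp.out.ne_zero⟩
  have hcop : ∀ k ∈ Finset.Icc 1 (p - 1), Nat.Coprime k (p ^ 2) := by
    intro k hk
    simp only [Finset.mem_Icc] at hk
    refine Nat.Coprime.pow_right 2 ?_
    refine Nat.Coprime.symm ((Nat.Prime.coprime_iff_not_dvd hp.out).mpr ?_)
    intro hdvd
    have := Nat.le_of_dvd (by omega) hdvd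
    omega
  have hunit : ∀ k ∈ Finset.Icc 1 (p - 1), IsUnit ((k : ZMod (p ^ 2))) := by
    intro k hk
    exact (ZMod.isUnit_iff_coprime k (p ^ 2)).mpr (hcop k hk)
  have hmem : ∀ k ∈ Finset.Icc 1 (p - 1), p - k ∈ Finset.Icc 1 (p - 1) := by
    intro k hk
    simp only [Finset.mem_Icc] at hk ⊢
    omega
  set T := ∑ k ∈ Finset.Icc 1 (p - 1), ((k : ZMod (p ^ 2)))⁻¹ with hT
  set U := ∑ k ∈ Finset.Icc 1 (p - 1),
      ((k : ZMod (p ^ 2)))⁻¹ * (((p - k : ℕ) : ZMod (p ^ 2)))⁻¹ with hU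
  -- reindexing : T is also the sum of inverses of (p-k)
  have hre : T = ∑ k ∈ Finset.Icc 1 (p - 1), (((p - k : ℕ) : ZMod (p ^ 2)))⁻¹ := by
    rw [hT]
    refine Finset.sum_nbij' (fun k => p - k) (fun k => p - k) hmem hmem ?_ ?_ ?_
    · intro k hk; simp only [Finset.mem_Icc] at hk; show p - (p - k) = k; omega
    · intro k hk; simp only [Finset.mem_Icc] at hk; show p - (p - k) = k; omega
    · intro k hk
      simp only [Finset.mem_Icc] at hk
      show ((k : ZMod (p ^ 2)))⁻¹ = (((p - (p - k) : ℕ) : ZMod (p ^ 2)))⁻¹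
      congr 2
      omega
  have key : ∀ k ∈ Finset.Icc 1 (p - 1),
      ((k : ZMod (p ^ 2)))⁻¹ + (((p - k : ℕ) : ZMod (p ^ 2)))⁻¹
        = (p : ZMod (p ^ 2)) * (((k : ZMod (p ^ 2)))⁻¹ * (((p - k : ℕ) : ZMod (p ^ 2)))⁻¹) := by
    intro k hk
    simp only [Finset.mem_Icc] at hk
    have ha : IsUnit ((k : ZMod (p ^ 2))) := hunit k (by simp only [Finset.mem_Icc]; omega)
    have hb : IsUnit (((p - k : ℕ) : ZMod (p ^ 2))) :=
      hunit _ (hmem k (by simp only [Finset.mem_Icc]; omega))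
    have hab : (k : ZMod (p ^ 2)) + ((p - k : ℕ) : ZMod (p ^ 2)) = (p : ZMod (p ^ 2)) := by
      rw [Nat.cast_sub (by omega)]
      ring
    rw [← hab, add_mul, ← mul_assoc, ZMod.mul_inv_of_unit _ ha, one_mul,
      mul_comm ((k : ZMod (p ^ 2)))⁻¹, ← mul_assoc, ZMod.mul_inv_of_unit _ hb, one_mul,
      add_comm]
  have h2T : 2 * T = (p : ZMod (p ^ 2)) * U := by
    rw [two_mul]
    nth_rewrite 2 [hre]
    rw [hT, ← Finset.sum_add_distrib, hU, Finset.mul_sum]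
    refine Finset.sum_congr rfl ?_
    intro k hk
    exact key k hk
  -- now show p * U = 0 using that U ≡ 0 mod p
  have hφ : (ZMod.castHom (dvd_pow_self p two_ne_zero) (ZMod p)) U = 0 := by
    rw [hU, map_sum]
    have hterm : ∀ k ∈ Finset.Icc 1 (p - 1),
        (ZMod.castHom (dvd_pow_self p two_ne_zero) (ZMod p))
          (((k : ZMod (p ^ 2)))⁻¹ * (((p - k : ℕ) : ZMod (p ^ 2)))⁻¹)
          = -(((k : ZMod p))⁻¹) ^ 2 := by
      intro k hk
      simp only [Finset.mem_Icc] at hk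
      set φ := ZMod.castHom (dvd_pow_self p two_ne_zero) (ZMod p)
      have ha : IsUnit ((k : ZMod (p ^ 2))) := hunit k (by simp only [Finset.mem_Icc]; omega)
      have hb : IsUnit (((p - k : ℕ) : ZMod (p ^ 2))) :=
        hunit _ (hmem k (by simp only [Finset.mem_Icc]; omega))
      have hfa : φ (((k : ZMod (p ^ 2)))⁻¹) = ((k : ZMod p))⁻¹ := by
        have h1 := congrArg φ (ZMod.mul_inv_of_unit _ ha)
        rw [map_mul, map_one, map_natCast] at h1
        exact eq_inv_of_mul_eq_one_left (by rw [mul_comm]; exact h1)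
      have hfb : φ ((((p - k : ℕ) : ZMod (p ^ 2)))⁻¹) = (-(k : ZMod p))⁻¹ := by
        have h1 := congrArg φ (ZMod.mul_inv_of_unit _ hb)
        rw [map_mul, map_one, map_natCast] at h1
        have hcast : ((p - k : ℕ) : ZMod p) = -(k : ZMod p) := by
          rw [Nat.cast_sub (by omega), ZMod.natCast_self, zero_sub]
        rw [hcast] at h1
        exact eq_inv_of_mul_eq_one_left (by rw [mul_comm]; exact h1)
      rw [map_mul, hfa, hfb]
      rw [inv_neg]
      ring
    rw [Finset.sum_congr rfl hterm, Finset.sum_neg_distrib, wh_aux1 p h5, neg_zero]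
  have hpU : (p : ZMod (p ^ 2)) * U = 0 := by
    have hUval : U = ((U.val : ℕ) : ZMod (p ^ 2)) := (ZMod.natCast_zmod_val U).symm
    have : ((U.val : ℕ) : ZMod p) = 0 := by
      have := hφ
      rw [hUval, map_natCast] at this
      exact this
    obtain ⟨m, hm⟩ := (ZMod.natCast_eq_zero_iff _ _).mp this
    rw [hUval, hm, ← Nat.cast_mul]
    have : p * (p * m) = p ^ 2 * m := by ring
    rw [this, Nat.cast_mul, ZMod.natCast_self, zero_mul]
  have h2T0 : 2 * T = 0 := by rw [h2T, hpU]
  have h2u : IsUnit (2 : ZMod (p ^ 2)) := by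
    rw [show ((2 : ZMod (p ^ 2))) = ((2 : ℕ) : ZMod (p ^ 2)) by norm_num]
    refine (ZMod.isUnit_iff_coprime 2 (p ^ 2)).mpr ?_
    refine Nat.Coprime.pow_right 2 ?_
    refine Nat.Coprime.symm ((Nat.Prime.coprime_iff_not_dvd hp.out).mpr ?_)
    intro hdvd
    have := Nat.le_of_dvd (by omega) hdvd
    omega
  have := congrArg (fun x => (2 : ZMod (p ^ 2))⁻¹ * x) h2T0
  simpa [← mul_assoc, ZMod.inv_mul_of_unit _ h2u] using this

/-- Wolstenholme (1852): for a prime `p ≥ 5`, `∑_{k=1}^{p-1} 1/k ≡ 0 (mod p²)` in `ℤ_p`. -/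
theorem wolstenholme_harmonic (p : ℕ) [hp : Fact p.Prime] (h5 : 5 ≤ p) :
    ∃ z : ℤ_[p],
      (∑ k ∈ Finset.Icc 1 (p - 1), (1 : ℚ_[p]) / (k : ℚ_[p]))
      = (p : ℚ_[p]) ^ 2 * (z : ℚ_[p]) := by
  classical
  have hIsUnit : ∀ k ∈ Finset.Icc 1 (p - 1), IsUnit ((k : ℤ_[p])) := by
    intro k hk
    simp only [Finset.mem_Icc] at hk
    rw [PadicInt.isUnit_iff]
    have hle : ‖((k : ℤ_[p]))‖ ≤ 1 := PadicInt.norm_le_one _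
    have hlt : ¬ ‖((k : ℤ_[p]))‖ < 1 := by
      rw [show ((k : ℤ_[p])) = (((k : ℤ) : ℤ_[p])) by push_cast; ring,
        PadicInt.norm_int_lt_one_iff_dvd]
      intro hdvd
      have hdvd' : p ∣ k := Int.ofNat_dvd.mp hdvd
      have := Nat.le_of_dvd (by omega) hdvd'
      have h5' : 5 ≤ p := h5
      omega
    exact le_antisymm hle (not_lt.mp hlt)
  set s : ℤ_[p] := ∑ k ∈ Finset.Icc 1 (p - 1), Ring.inverse ((k : ℤ_[p])) with hs
  have hmap : PadicInt.toZModPow 2 s = 0 := by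
    rw [hs, map_sum]
    have hterm : ∀ k ∈ Finset.Icc 1 (p - 1),
        PadicInt.toZModPow 2 (Ring.inverse ((k : ℤ_[p]))) = ((k : ZMod (p ^ 2)))⁻¹ := by
      intro k hk
      have hu := hIsUnit k hk
      have hmul := Ring.mul_inverse_cancel _ hu
      have h1 := congrArg (PadicInt.toZModPow 2) hmul
      rw [map_mul, map_one, map_natCast] at h1
      have hu2 : IsUnit ((k : ZMod (p ^ 2))) := IsUnit.of_mul_eq_one _ h1
      have h2 := ZMod.mul_inv_of_unit _ hu2
      exact hu2.mul_left_cancel (h1.trans h2.symm)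
    rw [Finset.sum_congr rfl hterm]
    exact wh_aux2 p h5
  have hker : s ∈ Ideal.span {((p : ℤ_[p])) ^ 2} := by
    rw [← PadicInt.ker_toZModPow]
    exact hmap
  obtain ⟨z, hz⟩ := Ideal.mem_span_singleton'.mp hker
  refine ⟨z, ?_⟩
  have hcoe : ((s : ℚ_[p])) = ∑ k ∈ Finset.Icc 1 (p - 1), (1 : ℚ_[p]) / (k : ℚ_[p]) := by
    rw [hs]
    rw [show ((((∑ k ∈ Finset.Icc 1 (p - 1), Ring.inverse ((k : ℤ_[p]))) : ℤ_[p])) : ℚ_[p])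
        = PadicInt.Coe.ringHom (∑ k ∈ Finset.Icc 1 (p - 1), Ring.inverse ((k : ℤ_[p])))
      from rfl, map_sum]
    refine Finset.sum_congr rfl ?_
    intro k hk
    have hu := hIsUnit k hk
    have hmul := Ring.mul_inverse_cancel _ hu
    have h1 := congrArg (PadicInt.Coe.ringHom (p := p)) hmul
    rw [map_mul, map_one, map_natCast] at h1
    have : (PadicInt.Coe.ringHom (Ring.inverse ((k : ℤ_[p])))) = ((k : ℚ_[p]))⁻¹ :=
      eq_inv_of_mul_eq_one_left (by rw [mul_comm]; exact h1)
    rw [this, one_div]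
  rw [← hcoe, ← hz]
  push_cast
  ring
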